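/- For μ > 0, ν ∈ ℝ, and l a nonnegative integer, the function φ̄_l(x,y,z) = D_l(ζ) e^{iμz} e^{iνy} with ζ = √(2/μ)(μx+ν) and D_l(ζ) = e^{−ζ²/4} H_l(ζ) satisfies χ₁ φ̄_l = −√(μ/2)(φ̄_{l+1} − l φ̄_{l−1}), χ₂ φ̄_l = i√(μ/2)(φ̄_{l+1} + l φ̄_{l−1}), and χ₃ φ̄_l = iμ φ̄_l, where χ₁ = ∂_x, χ₂ = ∂_y + x∂_z, χ₃ = ∂_z (with the convention φ̄_{−1} = 0). -/

import Mathlib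

noncomputable def hermiteR (l : ℕ) (z : ℝ) : ℝ :=
  Polynomial.aeval z (Polynomial.hermite l)

noncomputable def weberD (l : ℕ) (z : ℝ) : ℝ :=
  Real.exp (-z ^ 2 / 4) * hermiteR l z

noncomputable def chi1 (f : ℝ × ℝ × ℝ → ℂ) (p : ℝ × ℝ × ℝ) : ℂ :=
  fderiv ℝ f p (1, 0, 0)

noncomputable def chi2 (f : ℝ × ℝ × ℝ → ℂ) (p : ℝ × ℝ × ℝ) : ℂ :=
  fderiv ℝ f p (0, 1, 0) + p.1 * fderiv ℝ f p (0, 0, 1)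

noncomputable def chi3 (f : ℝ × ℝ × ℝ → ℂ) (p : ℝ × ℝ × ℝ) : ℂ :=
  fderiv ℝ f p (0, 0, 1)

/-- The mode function φ̄_l on ℝ³ (with φ̄ indexed over ℤ; φ̄_{-1} = 0 by the
    coefficient convention below, using ℕ indices and truncated subtraction). -/
noncomputable def phibar (μ ν : ℝ) (l : ℕ) (p : ℝ × ℝ × ℝ) : ℂ :=
  (weberD l (Real.sqrt (2 / μ) * (μ * p.1 + ν)) : ℂ) *
    Complex.exp (Complex.I * μ * p.2.2) * Complex.exp (Complex.I * ν * p.2.1)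

open Polynomial in
lemma derivative_hermite' (n : ℕ) :
    derivative (hermite n) = (n : Polynomial ℤ) * hermite (n - 1) := by
  induction n with
  | zero => simp
  | succ n ih =>
    rw [hermite_succ, derivative_sub, derivative_mul, derivative_X, one_mul, ih]
    cases n with
    | zero => simp
    | succ m =>
      simp only [Nat.succ_sub_one]
      rw [derivative_mul]
      simp only [derivative_natCast, zero_mul, zero_add]
      have h := hermite_succ m
      push_cast
      linear_combination (-(m : Polynomial ℤ) - 1) * h

lemma hermiteR_succ (l : ℕ) (z : ℝ) :
    hermiteR (l + 1) z = z * hermiteR l z - l * hermiteR (l - 1) z := by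
  unfold hermiteR
  rw [Polynomial.hermite_succ, map_sub, map_mul, Polynomial.aeval_X, derivative_hermite', map_mul]
  simp

lemma hermiteR_hasDerivAt (l : ℕ) (z : ℝ) :
    HasDerivAt (hermiteR l) (l * hermiteR (l - 1) z) z := by
  have e1 : hermiteR l = fun w => ((Polynomial.hermite l).map (Int.castRingHom ℝ)).eval w := by
    funext w
    simp [hermiteR, Polynomial.aeval_def, Polynomial.eval₂_eq_eval_map]
  rw [e1]
  refine (Polynomial.hasDerivAt ((Polynomial.hermite l).map (Int.castRingHom ℝ)) z).congr_deriv ?_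
  rw [Polynomial.derivative_map, derivative_hermite', Polynomial.map_mul]
  simp [hermiteR, Polynomial.aeval_def, Polynomial.eval₂_eq_eval_map]

lemma weberD_hasDerivAt (l : ℕ) (z : ℝ) :
    HasDerivAt (weberD l) (-(1/2) * (weberD (l+1) z - l * weberD (l-1) z)) z := by
  have hg : HasDerivAt (fun z : ℝ => Real.exp (-z ^ 2 / 4))
      (Real.exp (-z ^ 2 / 4) * (-z / 2)) z := by
    have h0 : HasDerivAt (fun z : ℝ => -z ^ 2 / 4) (-z / 2) z := by
      have := ((hasDerivAt_pow 2 z).neg.div_const 4)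
      exact this.congr_deriv (by ring)
    exact h0.exp
  have h := hg.mul (hermiteR_hasDerivAt l z)
  have hrec := hermiteR_succ l z
  refine h.congr_deriv ?_
  simp only [weberD]
  rw [hrec]
  ring

lemma weberD_rec (l : ℕ) (z : ℝ) :
    z * weberD l z = weberD (l + 1) z + l * weberD (l - 1) z := by
  simp only [weberD]
  rw [hermiteR_succ]
  ring

lemma sqrt_mul_self' (μ : ℝ) (hμ : 0 < μ) :
    Real.sqrt (2 / μ) * μ = 2 * Real.sqrt (μ / 2) := by
  have h1 : Real.sqrt (2 / μ) * μ = Real.sqrt (2 * μ) := by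
    rw [show (2 : ℝ) * μ = 2 / μ * μ ^ 2 by field_simp,
      Real.sqrt_mul (by positivity) (μ ^ 2), Real.sqrt_sq hμ.le]
  have h2 : 2 * Real.sqrt (μ / 2) = Real.sqrt (2 * μ) := by
    rw [show (2 : ℝ) * μ = 4 * (μ / 2) by ring, Real.sqrt_mul (by norm_num : (0:ℝ) ≤ 4),
      show Real.sqrt 4 = 2 by rw [show (4 : ℝ) = 2 ^ 2 by norm_num, Real.sqrt_sq]; norm_num]
  rw [h1, h2]

lemma sqrt_inv_mul (μ : ℝ) (hμ : 0 < μ) :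
    Real.sqrt (μ / 2) * Real.sqrt (2 / μ) = 1 := by
  rw [← Real.sqrt_mul (by positivity)]
  rw [show μ / 2 * (2 / μ) = 1 by field_simp]
  exact Real.sqrt_one

lemma cexp_hasDerivAt (c : ℂ) (t : ℝ) :
    HasDerivAt (fun s : ℝ => Complex.exp (c * s)) (c * Complex.exp (c * t)) t := by
  have h0 : HasDerivAt (fun s : ℝ => ((s : ℝ) : ℂ)) 1 t := by
    simpa using (hasDerivAt_id t).ofReal_comp
  have h1 := h0.const_mul c
  simpa [mul_comm] using h1.cexp

theorem phibar_chi_relations (μ ν : ℝ) (hμ : 0 < μ) (l : ℕ) (p : ℝ × ℝ × ℝ) :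
    chi1 (phibar μ ν l) p =
      -(Real.sqrt (μ / 2) : ℂ) * (phibar μ ν (l + 1) p - l * phibar μ ν (l - 1) p) ∧
    chi2 (phibar μ ν l) p =
      Complex.I * (Real.sqrt (μ / 2) : ℂ) *
        (phibar μ ν (l + 1) p + l * phibar μ ν (l - 1) p) ∧
    chi3 (phibar μ ν l) p = Complex.I * μ * phibar μ ν l p := by
  have hinner : HasDerivAt (fun t : ℝ => Real.sqrt (2 / μ) * (μ * t + ν))
      (Real.sqrt (2 / μ) * μ) p.1 := by
    simpa using (((hasDerivAt_id p.1).const_mul μ).add_const ν).const_mul (Real.sqrt (2 / μ))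
  have hA : HasDerivAt (fun t : ℝ => weberD l (Real.sqrt (2 / μ) * (μ * t + ν)))
      ((-(1/2) * (weberD (l+1) (Real.sqrt (2 / μ) * (μ * p.1 + ν))
        - l * weberD (l-1) (Real.sqrt (2 / μ) * (μ * p.1 + ν)))) * (Real.sqrt (2 / μ) * μ)) p.1 :=
    (weberD_hasDerivAt l _).comp p.1 hinner
  have hAc := hA.ofReal_comp
  have hF1 := (hasDerivAt_iff_hasFDerivAt.1 hAc).comp p
    (hasFDerivAt_fst (p := p) (𝕜 := ℝ))
  have hF2 := (hasDerivAt_iff_hasFDerivAt.1 (cexp_hasDerivAt (Complex.I * μ) p.2.2)).comp p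
    ((hasFDerivAt_snd (p := p.2) (𝕜 := ℝ)).comp p (hasFDerivAt_snd (p := p) (𝕜 := ℝ)))
  have hF3 := (hasDerivAt_iff_hasFDerivAt.1 (cexp_hasDerivAt (Complex.I * ν) p.2.1)).comp p
    ((hasFDerivAt_fst (p := p.2) (𝕜 := ℝ)).comp p (hasFDerivAt_snd (p := p) (𝕜 := ℝ)))
  have hL : HasFDerivAt (phibar μ ν l) _ p := (hF1.mul hF2).mul hF3
  have hfd := hL.fderiv
  refine ⟨?_, ?_, ?_⟩
  · rw [chi1, hfd]
    simp only [ContinuousLinearMap.add_apply, ContinuousLinearMap.smul_apply,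
      ContinuousLinearMap.coe_comp', Function.comp_apply, ContinuousLinearMap.smulRight_apply, ContinuousLinearMap.toSpanSingleton_apply,
      ContinuousLinearMap.coe_fst', ContinuousLinearMap.coe_snd', ContinuousLinearMap.one_apply,
      smul_eq_mul, Complex.real_smul, Complex.ofReal_zero, Complex.ofReal_one, zero_mul, mul_zero,
      add_zero, zero_add, one_mul, mul_one]
    rw [sqrt_mul_self' μ hμ]
    rw [show phibar μ ν (l+1) p = (weberD (l+1) (Real.sqrt (2 / μ) * (μ * p.1 + ν)) : ℂ) *
        Complex.exp (Complex.I * μ * p.2.2) * Complex.exp (Complex.I * ν * p.2.1) from rfl,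
      show phibar μ ν (l-1) p = (weberD (l-1) (Real.sqrt (2 / μ) * (μ * p.1 + ν)) : ℂ) *
        Complex.exp (Complex.I * μ * p.2.2) * Complex.exp (Complex.I * ν * p.2.1) from rfl]
    push_cast
    ring
  · rw [chi2, hfd]
    simp only [Pi.mul_apply, ContinuousLinearMap.add_apply, ContinuousLinearMap.smul_apply,
      ContinuousLinearMap.coe_comp', Function.comp_apply, ContinuousLinearMap.smulRight_apply, ContinuousLinearMap.toSpanSingleton_apply,
      ContinuousLinearMap.coe_fst', ContinuousLinearMap.coe_snd', ContinuousLinearMap.one_apply,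
      smul_eq_mul, Complex.real_smul, Complex.ofReal_zero, Complex.ofReal_one, zero_mul, mul_zero,
      add_zero, zero_add, one_mul, mul_one]
    rw [show phibar μ ν (l+1) p = (weberD (l+1) (Real.sqrt (2 / μ) * (μ * p.1 + ν)) : ℂ) *
        Complex.exp (Complex.I * μ * p.2.2) * Complex.exp (Complex.I * ν * p.2.1) from rfl,
      show phibar μ ν (l-1) p = (weberD (l-1) (Real.sqrt (2 / μ) * (μ * p.1 + ν)) : ℂ) *
        Complex.exp (Complex.I * μ * p.2.2) * Complex.exp (Complex.I * ν * p.2.1) from rfl]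
    have hrec : (μ * p.1 + ν) * weberD l (Real.sqrt (2 / μ) * (μ * p.1 + ν))
        = Real.sqrt (μ / 2) * (weberD (l + 1) (Real.sqrt (2 / μ) * (μ * p.1 + ν))
          + l * weberD (l - 1) (Real.sqrt (2 / μ) * (μ * p.1 + ν))) := by
      have h1 : μ * p.1 + ν = Real.sqrt (μ / 2) * (Real.sqrt (2 / μ) * (μ * p.1 + ν)) := by
        rw [← mul_assoc, sqrt_inv_mul μ hμ, one_mul]
      nth_rewrite 1 [h1]
      rw [mul_assoc, weberD_rec]
    have hrecC := congrArg (fun r : ℝ => (r : ℂ)) hrec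
    push_cast at hrecC ⊢
    linear_combination (Complex.I * Complex.exp (Complex.I * μ * p.2.2) *
      Complex.exp (Complex.I * ν * p.2.1)) * hrecC
  · rw [chi3, hfd]
    simp only [ContinuousLinearMap.add_apply, ContinuousLinearMap.smul_apply,
      ContinuousLinearMap.coe_comp', Function.comp_apply, ContinuousLinearMap.smulRight_apply, ContinuousLinearMap.toSpanSingleton_apply,
      ContinuousLinearMap.coe_fst', ContinuousLinearMap.coe_snd', ContinuousLinearMap.one_apply,
      smul_eq_mul, Complex.real_smul, Complex.ofReal_zero, Complex.ofReal_one, zero_mul, mul_zero,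
      add_zero, zero_add, one_mul, mul_one]
    rw [show phibar μ ν l p = (weberD l (Real.sqrt (2 / μ) * (μ * p.1 + ν)) : ℂ) *
        Complex.exp (Complex.I * μ * p.2.2) * Complex.exp (Complex.I * ν * p.2.1) from rfl]
    ring
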